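/- For every interval graph G, ν(G_α) ≤ ν(G_β) + 1. -/
import Mathlib


open Set

/-- An interval representation of a simple graph `G`: each vertex `v` gets a nonempty
closed interval `[l v, r v] ⊆ ℝ`, and two distinct vertices are adjacent iff their
intervals intersect. -/
structure IntervalRep {V : Type*} (G : SimpleGraph V) where
  l : V → ℝ
  r : V → ℝ
  le : ∀ v, l v ≤ r v
  adj_iff : ∀ u v : V, u ≠ v →
    (G.Adj u v ↔ (Icc (l u) (r u) ∩ Icc (l v) (r v)).Nonempty)

namespace IntervalRep

variable {V : Type*} {G : SimpleGraph V}

/-- The interval of a vertex. -/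
def itv (R : IntervalRep G) (v : V) : Set ℝ := Icc (R.l v) (R.r v)

/-- The nesting `ν(R)`: the maximum length of a chain of strictly nested vertex intervals. -/
noncomputable def nesting (R : IntervalRep G) : ℕ :=
  sSup {k : ℕ | ∃ f : Fin k → V, ∀ i j : Fin k, i < j → R.itv (f i) ⊂ R.itv (f j)}

/-- `ν_R(x)`: the maximum length of a chain of strictly nested vertex intervals whose
outermost interval is `I(x)` (counting `x` itself). -/
noncomputable def nuAt (R : IntervalRep G) (x : V) : ℕ :=
  sSup {k : ℕ | ∃ f : Fin k → V,
    (∀ i j : Fin k, i < j → R.itv (f i) ⊂ R.itv (f j)) ∧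
    ∃ h : 0 < k, f ⟨k - 1, by omega⟩ = x}

end IntervalRep

/-- A graph is an interval graph if it admits an interval representation. -/
def IsIntervalGraph {V : Type*} (G : SimpleGraph V) : Prop := Nonempty (IntervalRep G)

/-- The nesting number `ν(G)`: the minimum nesting over all interval representations. -/
noncomputable def nu {V : Type*} (G : SimpleGraph V) : ℕ :=
  sInf {n : ℕ | ∃ R : IntervalRep G, R.nesting = n}

/-- `G_α`: add vertices `u, a₁, a₂, b₁, b₂` (coded as `0,1,2,3,4`), with `u` adjacent to all
of `G` and to `a₁, b₁`; `a₁ ~ a₂` and `b₁ ~ b₂`. -/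
def Galpha {V : Type*} (G : SimpleGraph V) : SimpleGraph (V ⊕ Fin 5) :=
  SimpleGraph.fromRel fun x y =>
    match x, y with
    | Sum.inl a, Sum.inl b => G.Adj a b
    | Sum.inl _, Sum.inr i => i = 0
    | Sum.inr _, Sum.inl _ => False
    | Sum.inr i, Sum.inr j =>
        i = 0 ∧ j = 1 ∨ i = 1 ∧ j = 2 ∨ i = 0 ∧ j = 3 ∨ i = 3 ∧ j = 4

/-- `G_β`: add vertices `u, a₁, a₂` (coded as `0,1,2`), with `u` adjacent to all of `G`
and to `a₁`; `a₁ ~ a₂`. -/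
def Gbeta {V : Type*} (G : SimpleGraph V) : SimpleGraph (V ⊕ Fin 3) :=
  SimpleGraph.fromRel fun x y =>
    match x, y with
    | Sum.inl a, Sum.inl b => G.Adj a b
    | Sum.inl _, Sum.inr i => i = 0
    | Sum.inr _, Sum.inl _ => False
    | Sum.inr i, Sum.inr j => i = 0 ∧ j = 1 ∨ i = 1 ∧ j = 2

/-- `G_γ`: add vertices `u, v, a₁, a₂, b₁, b₂` (coded as `0,1,2,3,4,5`), with `u ~ v`, both
adjacent to all of `G`; `u ~ a₁`, `a₁ ~ a₂`, `v ~ b₁`, `b₁ ~ b₂`. -/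
def Ggamma {V : Type*} (G : SimpleGraph V) : SimpleGraph (V ⊕ Fin 6) :=
  SimpleGraph.fromRel fun x y =>
    match x, y with
    | Sum.inl a, Sum.inl b => G.Adj a b
    | Sum.inl _, Sum.inr i => i = 0 ∨ i = 1
    | Sum.inr _, Sum.inl _ => False
    | Sum.inr i, Sum.inr j =>
        i = 0 ∧ j = 1 ∨ i = 0 ∧ j = 2 ∨ i = 2 ∧ j = 3 ∨ i = 1 ∧ j = 4 ∨ i = 4 ∧ j = 5

/-- The disjoint union of a family of graphs, on the sigma type of their vertex sets. -/
def sigmaGraph {p : ℕ} {V : Fin p → Type*} (G : ∀ i, SimpleGraph (V i)) :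
    SimpleGraph (Σ i, V i) :=
  SimpleGraph.fromRel fun x y => ∃ h : x.1 = y.1, (G y.1).Adj (h ▸ x.2) y.2

/-- The graph obtained from `H` by adding one new vertex adjacent to every vertex of `H`. -/
def joinVertex {W : Type*} (H : SimpleGraph W) : SimpleGraph (W ⊕ Unit) :=
  SimpleGraph.fromRel fun x y =>
    match x, y with
    | Sum.inl a, Sum.inl b => H.Adj a b
    | Sum.inl _, Sum.inr _ => True
    | _, _ => False

section Aux

open Set Sum

lemma icc_inter_nonempty {a b c d : ℝ} :
    (Icc a b ∩ Icc c d).Nonempty ↔ (a ≤ b ∧ a ≤ d) ∧ c ≤ b ∧ c ≤ d := by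
  rw [Icc_inter_Icc, nonempty_Icc, max_le_iff, le_min_iff, le_min_iff]

namespace IntervalRep

variable {V : Type*} {G : SimpleGraph V}

lemma zero_mem_chains (R : IntervalRep G) :
    0 ∈ {k : ℕ | ∃ f : Fin k → V, ∀ i j : Fin k, i < j → R.itv (f i) ⊂ R.itv (f j)} :=
  ⟨Fin.elim0, fun i => i.elim0⟩

lemma chains_bdd [Fintype V] (R : IntervalRep G) :
    BddAbove {k : ℕ | ∃ f : Fin k → V, ∀ i j : Fin k, i < j → R.itv (f i) ⊂ R.itv (f j)} := by
  refine ⟨Fintype.card V, ?_⟩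
  rintro k ⟨f, hf⟩
  have hinj : Function.Injective f := by
    intro i j hij
    rcases lt_trichotomy i j with h | h | h
    · exact absurd (congrArg R.itv hij) (hf i j h).ne
    · exact h
    · exact absurd (congrArg R.itv hij.symm) (hf j i h).ne
  simpa using Fintype.card_le_of_injective f hinj

lemma nesting_le [Fintype V] (R : IntervalRep G) {n : ℕ}
    (h : ∀ k ∈ {k : ℕ | ∃ f : Fin k → V, ∀ i j : Fin k, i < j → R.itv (f i) ⊂ R.itv (f j)},
      k ≤ n) : R.nesting ≤ n :=
  csSup_le ⟨0, R.zero_mem_chains⟩ h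

lemma le_nesting [Fintype V] (R : IntervalRep G) {k : ℕ}
    (h : k ∈ {k : ℕ | ∃ f : Fin k → V, ∀ i j : Fin k, i < j → R.itv (f i) ⊂ R.itv (f j)}) :
    k ≤ R.nesting :=
  le_csSup (R.chains_bdd) h

end IntervalRep

end Aux

section Aux2
open Set Sum

variable {V : Type*} {G : SimpleGraph V}

lemma galpha_adj_inl_inl {a b : V} :
    (Galpha G).Adj (inl a) (inl b) ↔ G.Adj a b := by
  simp only [Galpha, SimpleGraph.fromRel_adj, ne_eq, inl.injEq]
  constructor
  · rintro ⟨h, h1 | h1⟩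
    · exact h1
    · exact h1.symm
  · intro h; exact ⟨h.ne, Or.inl h⟩

lemma galpha_adj_inl_inr {a : V} {j : Fin 5} :
    (Galpha G).Adj (inl a) (inr j) ↔ j = 0 := by
  simp [Galpha, SimpleGraph.fromRel_adj]

lemma galpha_adj_inr_inl {a : V} {j : Fin 5} :
    (Galpha G).Adj (inr j) (inl a) ↔ j = 0 := by
  rw [SimpleGraph.adj_comm]; exact galpha_adj_inl_inr

lemma galpha_adj_inr_inr {i j : Fin 5} :
    (Galpha G).Adj (inr i) (inr j) ↔
      (i = 0 ∧ j = 1 ∨ i = 1 ∧ j = 2 ∨ i = 0 ∧ j = 3 ∨ i = 3 ∧ j = 4) ∨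
      (j = 0 ∧ i = 1 ∨ j = 1 ∧ i = 2 ∨ j = 0 ∧ i = 3 ∨ j = 3 ∧ i = 4) := by
  simp only [Galpha, SimpleGraph.fromRel_adj, ne_eq, inr.injEq]
  constructor
  · rintro ⟨h, h1⟩; exact h1
  · intro h; refine ⟨?_, h⟩; rintro rfl; revert h; intro h; fin_cases i <;> simp_all

lemma gbeta_adj_inl_inl {a b : V} :
    (Gbeta G).Adj (inl a) (inl b) ↔ G.Adj a b := by
  simp only [Gbeta, SimpleGraph.fromRel_adj, ne_eq, inl.injEq]
  constructor
  · rintro ⟨h, h1 | h1⟩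
    · exact h1
    · exact h1.symm
  · intro h; exact ⟨h.ne, Or.inl h⟩

lemma gbeta_adj_inl_inr {a : V} {j : Fin 3} :
    (Gbeta G).Adj (inl a) (inr j) ↔ j = 0 := by
  simp [Gbeta, SimpleGraph.fromRel_adj]

lemma gbeta_adj_inr_inr {i j : Fin 3} :
    (Gbeta G).Adj (inr i) (inr j) ↔
      (i = 0 ∧ j = 1 ∨ i = 1 ∧ j = 2) ∨ (j = 0 ∧ i = 1 ∨ j = 1 ∧ i = 2) := by
  simp only [Gbeta, SimpleGraph.fromRel_adj, ne_eq, inr.injEq]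
  constructor
  · rintro ⟨h, h1⟩; exact h1
  · intro h; refine ⟨?_, h⟩; rintro rfl; revert h; intro h; fin_cases i <;> simp_all

end Aux2

section Aux3
open Set Sum IntervalRep

variable {V : Type*} {G : SimpleGraph V}

/-- Restriction of a representation of `G_β` to `G`. -/
def restrictBeta (R : IntervalRep (Gbeta G)) : IntervalRep G where
  l v := R.l (inl v)
  r v := R.r (inl v)
  le v := R.le (inl v)
  adj_iff a b hab := by
    rw [← gbeta_adj_inl_inl (G := G)]
    exact R.adj_iff (inl a) (inl b) (by simpa using hab)

lemma restrictBeta_nesting [Fintype V] (R : IntervalRep (Gbeta G)) :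
    (restrictBeta R).nesting ≤ R.nesting := by
  refine csSup_le_csSup (R.chains_bdd) ⟨0, (restrictBeta R).zero_mem_chains⟩ ?_
  rintro k ⟨f, hf⟩
  exact ⟨inl ∘ f, fun i j hij => hf i j hij⟩

variable (R₀ : IntervalRep G) (m M : ℝ)
  (hm : ∀ v, m ≤ R₀.l v) (hM : ∀ v, R₀.r v ≤ M) (hmM : m ≤ M)

/-- A representation of `G_β` built from one of `G`. -/
def betaRep : IntervalRep (Gbeta G) where
  l := Sum.elim R₀.l ![m - 1, m - 2, m - 3]
  r := Sum.elim R₀.r ![M + 1, m - 1, m - 2]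
  le := by
    rintro (v | j)
    · exact R₀.le v
    · fin_cases j <;> simp <;> linarith [hmM]
  adj_iff := by
    rintro (v | i) (w | j) hxy
    · rw [gbeta_adj_inl_inl]
      exact R₀.adj_iff v w (by simpa using hxy)
    · have h1 := hm v; have h2 := hM v; have h3 := R₀.le v
      rw [gbeta_adj_inl_inr, icc_inter_nonempty]
      fin_cases j <;> simp <;> (intros; repeat' constructor) <;> intros <;> linarith
    · have h1 := hm w; have h2 := hM w; have h3 := R₀.le w
      rw [SimpleGraph.adj_comm, Set.inter_comm, gbeta_adj_inl_inr, icc_inter_nonempty]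
      fin_cases i <;> simp <;> (intros; repeat' constructor) <;> intros <;> linarith
    · rw [gbeta_adj_inr_inr, icc_inter_nonempty]
      fin_cases i <;> fin_cases j <;>
        first
          | exact absurd rfl hxy
          | (simp <;> (intros; repeat' constructor) <;> intros <;> linarith)

end Aux3

section Aux4
open Set Sum IntervalRep

variable {V : Type*} {G : SimpleGraph V}
variable (R₀ : IntervalRep G) (m M : ℝ)
  (hm : ∀ v, m ≤ R₀.l v) (hM : ∀ v, R₀.r v ≤ M) (hmM : m ≤ M)

/-- A representation of `G_α` built from one of `G`. -/
def alphaRep : IntervalRep (Galpha G) where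
  l := Sum.elim R₀.l ![m - 1, m - 2, m - 3, M + 1, M + 2]
  r := Sum.elim R₀.r ![M + 1, m - 1, m - 2, M + 2, M + 3]
  le := by
    rintro (v | j)
    · exact R₀.le v
    · fin_cases j <;> simp <;> linarith [hmM]
  adj_iff := by
    rintro (v | i) (w | j) hxy
    · rw [galpha_adj_inl_inl]
      exact R₀.adj_iff v w (by simpa using hxy)
    · have h1 := hm v; have h2 := hM v; have h3 := R₀.le v
      rw [galpha_adj_inl_inr, icc_inter_nonempty]
      fin_cases j <;> simp <;> (intros; repeat' constructor) <;> intros <;> linarith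
    · have h1 := hm w; have h2 := hM w; have h3 := R₀.le w
      rw [SimpleGraph.adj_comm, Set.inter_comm, galpha_adj_inl_inr, icc_inter_nonempty]
      fin_cases i <;> simp <;> (intros; repeat' constructor) <;> intros <;> linarith
    · rw [galpha_adj_inr_inr, icc_inter_nonempty]
      fin_cases i <;> fin_cases j <;>
        first
          | exact absurd rfl hxy
          | (simp <;> (intros; repeat' constructor) <;> intros <;> linarith)

lemma alphaRep_not_inr_ssubset (j : Fin 5) (y : V ⊕ Fin 5) :
    ¬ (alphaRep R₀ m M hm hM hmM).itv (inr j) ⊂ (alphaRep R₀ m M hm hM hmM).itv y := by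
  intro h
  have hsub := h.subset
  rw [IntervalRep.itv, IntervalRep.itv,
    Icc_subset_Icc_iff ((alphaRep R₀ m M hm hM hmM).le (inr j))] at hsub
  obtain ⟨hs1, hs2⟩ := hsub
  rcases y with w | j'
  · have h1 := hm w; have h2 := hM w; have h3 := R₀.le w
    fin_cases j <;> simp only [alphaRep, Sum.elim_inl, Sum.elim_inr] at hs1 hs2 <;>
      simp at hs1 hs2 <;> linarith
  · by_cases hjj : j = j'
    · subst hjj; exact h.ne rfl
    · fin_cases j <;> fin_cases j' <;>
        first
          | exact hjj rfl
          | (simp only [alphaRep, Sum.elim_inr] at hs1 hs2; simp at hs1 hs2 <;> linarith)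

end Aux4

section Aux5
open Set Sum IntervalRep

variable {V : Type*} {G : SimpleGraph V}
variable (R₀ : IntervalRep G) (m M : ℝ)
  (hm : ∀ v, m ≤ R₀.l v) (hM : ∀ v, R₀.r v ≤ M) (hmM : m ≤ M)

lemma alphaRep_nesting [Fintype V] :
    (alphaRep R₀ m M hm hM hmM).nesting ≤ R₀.nesting + 1 := by
  refine (alphaRep R₀ m M hm hM hmM).nesting_le ?_
  rintro k ⟨f, hf⟩
  rcases Nat.eq_zero_or_pos k with rfl | hk
  · omega
  have hinl : ∀ i : Fin k, (i : ℕ) < k - 1 → ∃ v, f i = inl v := by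
    intro i hi
    have hik : (i : ℕ) + 1 < k := by omega
    have hlt : i < (⟨(i : ℕ) + 1, hik⟩ : Fin k) := by simp [Fin.lt_def]
    have hss := hf i ⟨(i : ℕ) + 1, hik⟩ hlt
    rcases hfi : f i with v | j
    · exact ⟨v, rfl⟩
    · rw [hfi] at hss
      exact absurd hss (alphaRep_not_inr_ssubset R₀ m M hm hM hmM j _)
  have hmem : k - 1 ≤ R₀.nesting := by
    refine R₀.le_nesting ?_
    have hlt' : ∀ i : Fin (k - 1), (i : ℕ) < k := fun i => by have := i.2; omega
    refine ⟨fun i => (hinl ⟨(i : ℕ), hlt' i⟩ (by simpa using i.2)).choose, ?_⟩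
    intro i j hij
    have e1 := (hinl ⟨(i : ℕ), hlt' i⟩ (by simpa using i.2)).choose_spec
    have e2 := (hinl ⟨(j : ℕ), hlt' j⟩ (by simpa using j.2)).choose_spec
    have hss := hf ⟨(i : ℕ), hlt' i⟩ ⟨(j : ℕ), hlt' j⟩ (by simp only [Fin.mk_lt_mk]; exact hij)
    rw [e1, e2] at hss
    exact hss
  omega

lemma exists_bounds (R : IntervalRep G) [Finite V] :
    ∃ m M, (∀ v, m ≤ R.l v) ∧ (∀ v, R.r v ≤ M) ∧ m ≤ M := by
  obtain ⟨M0, hM0⟩ := Finite.exists_le fun v => R.r v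
  obtain ⟨m1, hm1⟩ := Finite.exists_le fun v => -R.l v
  refine ⟨min (-m1) M0, M0, fun v => ?_, hM0, min_le_right _ _⟩
  have := hm1 v
  calc min (-m1) M0 ≤ -m1 := min_le_left _ _
    _ ≤ R.l v := by linarith

end Aux5

/-- `ν(G_α) ≤ ν(G_β) + 1`. -/
theorem stmt_5 {V : Type*} [Fintype V] (G : SimpleGraph V) (hG : IsIntervalGraph G) :
    nu (Galpha G) ≤ nu (Gbeta G) + 1 := by
  classical
  obtain ⟨R₀⟩ := hG
  obtain ⟨m0, M0, hm0, hM0, hmM0⟩ := exists_bounds R₀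
  have hne : {n : ℕ | ∃ R : IntervalRep (Gbeta G), R.nesting = n}.Nonempty :=
    ⟨(betaRep R₀ m0 M0 hm0 hM0 hmM0).nesting, _, rfl⟩
  obtain ⟨R, hR⟩ := Nat.sInf_mem hne
  set R₁ := restrictBeta R with hR₁
  obtain ⟨m, M, hm, hM, hmM⟩ := exists_bounds R₁
  have h1 : nu (Galpha G) ≤ (alphaRep R₁ m M hm hM hmM).nesting :=
    Nat.sInf_le ⟨_, rfl⟩
  have h2 := alphaRep_nesting R₁ m M hm hM hmM
  have h3 := restrictBeta_nesting R
  rw [← hR₁] at h3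
  have h4 : R.nesting = nu (Gbeta G) := hR
  omega
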